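/- Let f : {0,1}^L → {0,1} depend on all L coordinates (for every i ∈ [L] there exist inputs y, z differing only in coordinate i with f(y) ≠ f(z)). Let n, k satisfy L ≤ k ≤ n − L, and define g on the slice {x ∈ {0,1}^n : Σx_i = k} by g(x) = f(x_1, …, x_L). Then g is not an (L−1)-junta: there is no set S ⊆ [n] of size at most L−1 and function h : {0,1}^S → {0,1} with g(x) = h(x|_S) for all x in the slice. -/

import Mathlib

/-- Hamming weight of a Boolean vector. -/
def wt {n : ℕ} (x : Fin n → Bool) : ℕ :=
  (Finset.univ.filter fun t => x t = true).card

theorem stmt2 (n k L : ℕ) (hLk : L ≤ k) (hkn : k ≤ n - L)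
    (f : (Fin L → Bool) → Bool)
    (hdep : ∀ i : Fin L, ∃ y z : Fin L → Bool,
      (∀ t, t ≠ i → y t = z t) ∧ f y ≠ f z) :
    ¬ ∃ (S : Finset (Fin n)) (h : (S → Bool) → Bool), S.card < L ∧
      ∀ x : Fin n → Bool, wt x = k →
        f (fun i => x (Fin.castLE (le_trans hLk (le_trans hkn (Nat.sub_le n L))) i))
          = h (fun i => x i.1) := by
  rintro ⟨S, h, hS, hx⟩
  have hLn : L ≤ n := le_trans hLk (le_trans hkn (Nat.sub_le n L))
  have hLpos : 1 ≤ L := by omega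
  set e : Fin L → Fin n := Fin.castLE hLn with he
  have hinj : Function.Injective e := Fin.castLE_injective hLn
  set A : Finset (Fin n) := Finset.univ.image e with hA
  have hAcard : A.card = L := by
    rw [hA, Finset.card_image_of_injective _ hinj, Finset.card_univ, Fintype.card_fin]
  have hAmem : ∀ t : Fin n, t ∈ A ↔ t.val < L := by
    intro t
    simp only [hA, Finset.mem_image, Finset.mem_univ, true_and]
    constructor
    · rintro ⟨i', rfl⟩; exact i'.isLt
    · intro ht; exact ⟨⟨t.val, ht⟩, Fin.ext rfl⟩
  -- choose i outside S among first L coords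
  have hiEx : ∃ i : Fin L, e i ∉ S := by
    by_contra hc
    push_neg at hc
    have hsub : A ⊆ S := Finset.image_subset_iff.mpr fun i _ => hc i
    have := Finset.card_le_card hsub
    omega
  obtain ⟨i, hiS⟩ := hiEx
  -- choose j outside S and outside first L coords
  have hBcard : (Aᶜ : Finset (Fin n)).card = n - L := by
    rw [Finset.card_compl, hAcard, Fintype.card_fin]
  have h0 : 0 < (Aᶜ : Finset (Fin n)).card - S.card := by omega
  obtain ⟨j, hj⟩ := Finset.card_pos.mp (lt_of_lt_of_le h0 (Finset.le_card_sdiff S Aᶜ))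
  rw [Finset.mem_sdiff] at hj
  have hjA : j ∈ (Aᶜ : Finset (Fin n)) := hj.1
  have hjS : j ∉ S := hj.2
  have hjL : L ≤ j.val := by
    have := Finset.mem_compl.mp hjA
    rw [hAmem] at this
    omega
  have key : ∀ y z : Fin L → Bool, (∀ t, t ≠ i → y t = z t) →
      y i = false → z i = true → f y = f z := by
    intro y z hyz hyi hzi
    set Y : Finset (Fin L) := Finset.univ.filter (fun t => y t = true) with hY
    have hYi : i ∉ Y := by simp [hY, hyi]
    have hYcard : Y.card + 1 ≤ L := by
      have hsub : Y ⊆ Finset.univ.erase i := fun t ht =>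
        Finset.mem_erase.mpr ⟨by rintro rfl; exact hYi ht, Finset.mem_univ t⟩
      have := Finset.card_le_card hsub
      rw [Finset.card_erase_of_mem (Finset.mem_univ i), Finset.card_univ,
        Fintype.card_fin] at this
      omega
    have hZ : Finset.univ.filter (fun t => z t = true) = insert i Y := by
      ext t
      by_cases ht : t = i
      · subst ht; simp [hzi, hY]
      · simp [hY, ht, hyz t ht]
    have hmle : k - Y.card - 1 ≤ ((Aᶜ : Finset (Fin n)).erase j).card := by
      rw [Finset.card_erase_of_mem hjA, hBcard]
      omega
    obtain ⟨T, hTsub, hTcard⟩ := Finset.exists_subset_card_eq hmle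
    have hTj : j ∉ T := fun hmem => (Finset.mem_erase.mp (hTsub hmem)).1 rfl
    have hTL : ∀ t ∈ T, L ≤ t.val := by
      intro t ht
      have h1 := Finset.mem_compl.mp (Finset.mem_erase.mp (hTsub ht)).2
      rw [hAmem] at h1
      omega
    set U1 : Finset (Fin n) := Y.image e ∪ insert j T with hU1
    set U2 : Finset (Fin n) := (insert i Y).image e ∪ T with hU2
    set x1 : Fin n → Bool := fun t => decide (t ∈ U1) with hx1
    set x2 : Fin n → Bool := fun t => decide (t ∈ U2) with hx2
    have himgL : ∀ (W : Finset (Fin L)) (t : Fin n), t ∈ W.image e → t.val < L := by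
      intro W t ht
      obtain ⟨i', _, rfl⟩ := Finset.mem_image.mp ht
      exact i'.isLt
    have hwtU : ∀ U : Finset (Fin n), wt (fun t => decide (t ∈ U)) = U.card := by
      intro U
      unfold wt
      congr 1
      ext t
      simp
    have hd1 : Disjoint (Y.image e) (insert j T) := by
      rw [Finset.disjoint_left]
      intro a ha hb
      have h1 := himgL Y a ha
      rcases Finset.mem_insert.mp hb with rfl | hb'
      · omega
      · have := hTL a hb'; omega
    have hd2 : Disjoint ((insert i Y).image e) T := by
      rw [Finset.disjoint_left]
      intro a ha hb
      have h1 := himgL _ a ha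
      have := hTL a hb
      omega
    have hwt1 : wt x1 = k := by
      rw [hx1, hwtU, hU1, Finset.card_union_of_disjoint hd1,
        Finset.card_image_of_injective _ hinj,
        Finset.card_insert_of_notMem hTj, hTcard]
      omega
    have hwt2 : wt x2 = k := by
      rw [hx2, hwtU, hU2, Finset.card_union_of_disjoint hd2,
        Finset.card_image_of_injective _ hinj,
        Finset.card_insert_of_notMem hYi, hTcard]
      omega
    -- membership characterizations
    have hmem1 : ∀ (t : Fin n) (ht : t.val < L), (t ∈ U1 ↔ y ⟨t.val, ht⟩ = true) := by
      intro t ht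
      rw [hU1, Finset.mem_union]
      constructor
      · rintro (h1 | h1)
        · obtain ⟨i', hi', heq⟩ := Finset.mem_image.mp h1
          have : (⟨t.val, ht⟩ : Fin L) = i' := hinj (by exact Fin.ext (by simp [he, ← heq]))
          rw [this]
          exact (Finset.mem_filter.mp hi').2
        · rcases Finset.mem_insert.mp h1 with rfl | h1'
          · omega
          · have := hTL t h1'; omega
      · intro h1
        left
        exact Finset.mem_image.mpr ⟨⟨t.val, ht⟩, Finset.mem_filter.mpr ⟨Finset.mem_univ _, h1⟩,
          Fin.ext rfl⟩
    have hmem2 : ∀ (t : Fin n) (ht : t.val < L), (t ∈ U2 ↔ z ⟨t.val, ht⟩ = true) := by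
      intro t ht
      rw [hU2, Finset.mem_union]
      constructor
      · rintro (h1 | h1)
        · obtain ⟨i', hi', heq⟩ := Finset.mem_image.mp h1
          have hti : (⟨t.val, ht⟩ : Fin L) = i' := hinj (by exact Fin.ext (by simp [he, ← heq]))
          rw [hti]
          have : i' ∈ Finset.univ.filter (fun t => z t = true) := by rw [hZ]; exact hi'
          exact (Finset.mem_filter.mp this).2
        · have := hTL t h1; omega
      · intro h1
        left
        have : (⟨t.val, ht⟩ : Fin L) ∈ insert i Y := by
          rw [← hZ]
          exact Finset.mem_filter.mpr ⟨Finset.mem_univ _, h1⟩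
        exact Finset.mem_image.mpr ⟨⟨t.val, ht⟩, this, Fin.ext rfl⟩
    have hmemHigh1 : ∀ t : Fin n, L ≤ t.val → t ≠ j → (t ∈ U1 ↔ t ∈ T) := by
      intro t ht htj
      rw [hU1, Finset.mem_union]
      constructor
      · rintro (h1 | h1)
        · have := himgL Y t h1; omega
        · rcases Finset.mem_insert.mp h1 with rfl | h1'
          · exact absurd rfl htj
          · exact h1'
      · intro h1; right; exact Finset.mem_insert_of_mem h1
    have hmemHigh2 : ∀ t : Fin n, L ≤ t.val → (t ∈ U2 ↔ t ∈ T) := by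
      intro t ht
      rw [hU2, Finset.mem_union]
      constructor
      · rintro (h1 | h1)
        · have := himgL _ t h1; omega
        · exact h1
      · intro h1; right; exact h1
    -- agreement on S
    have hagree : (fun s : S => x1 s.1) = (fun s : S => x2 s.1) := by
      funext s
      obtain ⟨s, hs⟩ := s
      simp only [hx1, hx2]
      rw [decide_eq_decide]
      by_cases hsL : s.val < L
      · rw [hmem1 s hsL, hmem2 s hsL]
        have hne : (⟨s.val, hsL⟩ : Fin L) ≠ i := by
          rintro heq
          apply hiS
          have : e i = s := by rw [← heq]; exact Fin.ext rfl
          rwa [this]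
        rw [hyz _ hne]
      · have hsj : s ≠ j := by rintro rfl; exact hjS hs
        rw [hmemHigh1 s (by omega) hsj, hmemHigh2 s (by omega)]
    -- restrictions
    have hr1 : (fun i' => x1 (Fin.castLE hLn i')) = y := by
      funext i'
      have hlt : (Fin.castLE hLn i').val < L := i'.isLt
      have := hmem1 _ hlt
      have hcast : (⟨(Fin.castLE hLn i').val, hlt⟩ : Fin L) = i' := Fin.ext rfl
      rw [hcast] at this
      simp only [hx1]
      rw [decide_eq_decide.mpr this]
      exact Bool.decide_coe _
    have hr2 : (fun i' => x2 (Fin.castLE hLn i')) = z := by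
      funext i'
      have hlt : (Fin.castLE hLn i').val < L := i'.isLt
      have := hmem2 _ hlt
      have hcast : (⟨(Fin.castLE hLn i').val, hlt⟩ : Fin L) = i' := Fin.ext rfl
      rw [hcast] at this
      simp only [hx2]
      rw [decide_eq_decide.mpr this]
      exact Bool.decide_coe _
    calc f y = f (fun i' => x1 (Fin.castLE hLn i')) := by rw [hr1]
      _ = h (fun s => x1 s.1) := hx x1 hwt1
      _ = h (fun s => x2 s.1) := congrArg h hagree
      _ = f (fun i' => x2 (Fin.castLE hLn i')) := (hx x2 hwt2).symm
      _ = f z := by rw [hr2]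
  obtain ⟨y, z, hyz, hf⟩ := hdep i
  cases hy : y i <;> cases hz : z i
  · exact hf (congrArg f (funext fun t => by
      by_cases ht : t = i
      · subst ht; rw [hy, hz]
      · exact hyz t ht))
  · exact hf (key y z hyz hy hz)
  · exact hf (key z y (fun t ht => (hyz t ht).symm) hz hy).symm
  · exact hf (congrArg f (funext fun t => by
      by_cases ht : t = i
      · subst ht; rw [hy, hz]
      · exact hyz t ht))
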